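/- Let T be an Aronszajn tree and E ⊆ ω₁ uncountable. Then there is a strictly order-preserving map f : T_E → ℚ if and only if there is a map g : T_E → ω such that whenever x < y are both in T_E, g(x) ≠ g(y). -/

import Mathlib

open Cardinal Set

/-- The first uncountable ordinal. -/
noncomputable def omega1 : Ordinal := (Cardinal.aleph 1).ord

universe u_2

/-- A tree of height `ω₁`: a partial order equipped with a rank (height) function into the
countable ordinals which is strictly monotone, has countable levels, and whose sets of
predecessors are linearly ordered. -/
structure OmegaOneTree (T : Type*) [PartialOrder T] where
  rk : T → Ordinal.{u_2}
  rk_lt_omega1 : ∀ x, rk x < omega1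
  rk_strictMono : ∀ {x y : T}, x < y → rk x < rk y
  levels_countable : ∀ β : Ordinal, {x : T | rk x = β}.Countable
  pred_linear : ∀ x y z : T, y ≤ x → z ≤ x → y ≤ z ∨ z ≤ y

/-- `C` is a closed unbounded subset of `ω₁`. -/
def IsClubBelow (C : Set Ordinal) : Prop :=
  C ⊆ Set.Iio omega1 ∧ (∀ α < omega1, ∃ β ∈ C, α < β) ∧
    ∀ δ, 0 < δ → δ < omega1 → (∀ β < δ, ∃ γ ∈ C, β < γ ∧ γ < δ) → δ ∈ C

/-- `S` is a stationary subset of `ω₁`. -/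
def IsStationaryBelow (S : Set Ordinal) : Prop :=
  S ⊆ Set.Iio omega1 ∧ ∀ C, IsClubBelow C → (S ∩ C).Nonempty

private lemma georange (n : ℕ) :
    ∑ k ∈ Finset.range n, ((1:ℚ)/2)^k = 2 - 2 * ((1:ℚ)/2)^n := by
  induction n with
  | zero => simp
  | succ n ih => rw [Finset.sum_range_succ, ih]; ring

private lemma geoIco (a M : ℕ) :
    ∑ k ∈ Finset.Ico (a+1) M, ((1:ℚ)/2)^k < ((1:ℚ)/2)^a := by
  rcases le_or_gt M (a+1) with h | h
  · rw [Finset.Ico_eq_empty (by omega), Finset.sum_empty]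
    positivity
  · rw [Finset.sum_Ico_eq_sub _ (by omega : a + 1 ≤ M), georange, georange]
    have h1 : (0:ℚ) < ((1:ℚ)/2)^M := by positivity
    have h2 : ((1:ℚ)/2)^(a+1) = (1/2) * ((1:ℚ)/2)^a := by rw [pow_succ]; ring
    linarith

/-- A partial order with linearly ordered sets of predecessors which carries a chain-injective
coloring `g : S → ℕ` admits a strictly increasing map into `ℚ`. -/
private lemma special_embeds {S : Type*} [PartialOrder S]
    (hlin : ∀ x y z : S, y ≤ x → z ≤ x → y ≤ z ∨ z ≤ y)
    (g : S → ℕ) (hg : ∀ x y : S, x < y → g x ≠ g y) :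
    ∃ f : S → ℚ, ∀ x y : S, x < y → f x < f y := by
  classical
  -- `I x k` : some "record" predecessor of `x` has color `k`.
  set I : S → ℕ → Prop := fun x k =>
    ∃ z : S, (z ≤ x ∧ ∀ w : S, z < w → w ≤ x → g z < g w) ∧ g z = k with hIdef
  have h1 : ∀ x k, I x k → k ≤ g x := by
    rintro x k ⟨z, ⟨hzx, hrec⟩, rfl⟩
    rcases eq_or_lt_of_le hzx with h | h
    · rw [h]
    · exact (hrec x h le_rfl).le
  set f : S → ℚ :=
    fun x => ∑ k ∈ Finset.range (g x + 1), if I x k then ((1:ℚ)/2)^k else 0 with hfdef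
  have hext : ∀ (x : S) (M : ℕ), g x + 1 ≤ M →
      f x = ∑ k ∈ Finset.range M, (if I x k then ((1:ℚ)/2)^k else 0) := by
    intro x M hM
    apply Finset.sum_subset (Finset.range_subset_range.mpr hM)
    intro k hk hk2
    rw [if_neg]
    intro hIk
    exact hk2 (Finset.mem_range.mpr (by have := h1 x k hIk; omega))
  refine ⟨f, ?_⟩
  intro x y hxy
  -- least color appearing on the (nonempty) chain segment `(x, y]`
  have hP : ∃ k, ∃ w : S, x < w ∧ w ≤ y ∧ g w = k := ⟨g y, y, hxy, le_rfl, rfl⟩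
  set kstar := Nat.find hP with hksdef
  obtain ⟨zstar, hzx, hzy, hzg⟩ := Nat.find_spec hP
  have hmin : ∀ w : S, x < w → w ≤ y → kstar ≤ g w :=
    fun w ha hb => Nat.find_min' hP ⟨w, ha, hb, rfl⟩
  -- `zstar` is a record for `y` of color `kstar`
  have hrecstar : I y kstar := by
    refine ⟨zstar, ⟨hzy, ?_⟩, hzg⟩
    intro w hw1 hw2
    have h3 := hmin w (hzx.trans hw1) hw2
    have hne := hg zstar w hw1
    omega
  -- below `kstar`, records of `x` and of `y` coincide
  have hiff : ∀ k, k < kstar → (I y k ↔ I x k) := by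
    intro k hk
    constructor
    · rintro ⟨z, ⟨hzy', hrec⟩, rfl⟩
      have hzx' : z ≤ x := by
        rcases hlin y z x hzy' hxy.le with h | h
        · exact h
        · rcases eq_or_lt_of_le h with h' | h'
          · exact h'.ge
          · have := hmin z h' hzy'; omega
      exact ⟨z, ⟨hzx', fun w hw1 hw2 => hrec w hw1 (hw2.trans hxy.le)⟩, rfl⟩
    · rintro ⟨z, ⟨hzx', hrec⟩, rfl⟩
      refine ⟨z, ⟨hzx'.trans hxy.le, ?_⟩, rfl⟩
      intro w hw1 hw2
      rcases hlin y w x hw2 hxy.le with h | h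
      · exact hrec w hw1 h
      · rcases eq_or_lt_of_le h with h' | h'
        · exact hrec w hw1 h'.ge
        · have := hmin w h' hw2; omega
  -- `x` has no record of color `kstar`
  have hnotx : ¬ I x kstar := by
    rintro ⟨z, ⟨hzx', -⟩, hgz⟩
    exact hg z zstar (lt_of_le_of_lt hzx' hzx) (by omega)
  set M := max (g x) (g y) + 1 with hMdef
  have hky : kstar ≤ g y := h1 y kstar hrecstar
  rw [hext x M (by omega), hext y M (by omega)]
  have hksM : kstar + 1 ≤ M := by omega
  have hsplit : ∀ u : S, ∑ k ∈ Finset.range M, (if I u k then ((1:ℚ)/2)^k else 0)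
      = (∑ k ∈ Finset.range (kstar+1), (if I u k then ((1:ℚ)/2)^k else 0))
        + ∑ k ∈ Finset.Ico (kstar+1) M, (if I u k then ((1:ℚ)/2)^k else 0) := by
    intro u
    rw [Finset.range_eq_Ico, ← Finset.sum_Ico_consecutive _ (Nat.zero_le _) hksM,
      ← Finset.range_eq_Ico]
  have hA : (∑ k ∈ Finset.range (kstar+1), (if I y k then ((1:ℚ)/2)^k else 0))
      = (∑ k ∈ Finset.range (kstar+1), (if I x k then ((1:ℚ)/2)^k else 0))
        + ((1:ℚ)/2)^kstar := by
    rw [Finset.sum_range_succ, Finset.sum_range_succ, if_pos hrecstar, if_neg hnotx,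
      Finset.sum_congr rfl fun k hk => if_congr (hiff k (Finset.mem_range.mp hk)) rfl rfl]
    ring
  have hBx : (∑ k ∈ Finset.Ico (kstar+1) M, (if I x k then ((1:ℚ)/2)^k else 0))
      < ((1:ℚ)/2)^kstar := by
    calc (∑ k ∈ Finset.Ico (kstar+1) M, (if I x k then ((1:ℚ)/2)^k else 0))
        ≤ ∑ k ∈ Finset.Ico (kstar+1) M, ((1:ℚ)/2)^k := by
          apply Finset.sum_le_sum
          intro k _
          split_ifs
          · exact le_rfl
          · positivity
      _ < ((1:ℚ)/2)^kstar := geoIco kstar M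
  have hBy : 0 ≤ ∑ k ∈ Finset.Ico (kstar+1) M, (if I y k then ((1:ℚ)/2)^k else 0) := by
    apply Finset.sum_nonneg
    intro k _
    split_ifs
    · positivity
    · exact le_rfl
  rw [hsplit x, hsplit y, hA]
  linarith

/-- For an Aronszajn tree `T` and uncountable `E ⊆ ω₁`, there is a strictly
order-preserving map `T_E → ℚ` iff there is a map `g : T_E → ω` with `g x ≠ g y` whenever
`x < y` in `T_E`. -/
theorem stmt2 {T : Type*} [PartialOrder T] (t : OmegaOneTree T)
    (hAron : ∀ c : Set T, IsChain (· ≤ ·) c → c.Countable)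
    (E : Set Ordinal) (hE : E ⊆ Set.Iio omega1) (hEunc : ¬ E.Countable) :
    (∃ f : {x : T // t.rk x ∈ E} → ℚ,
        ∀ x y : {x : T // t.rk x ∈ E}, (x : T) < (y : T) → f x < f y) ↔
      (∃ g : {x : T // t.rk x ∈ E} → ℕ,
        ∀ x y : {x : T // t.rk x ∈ E}, (x : T) < (y : T) → g x ≠ g y) := by
  constructor
  · rintro ⟨f, hf⟩
    exact ⟨fun x => Encodable.encode (f x), fun x y h he =>
      (hf x y h).ne (Encodable.encode_injective he)⟩
  · rintro ⟨g, hg⟩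
    have hlin : ∀ x y z : {x : T // t.rk x ∈ E}, y ≤ x → z ≤ x → y ≤ z ∨ z ≤ y := by
      intro x y z h1 h2
      rcases t.pred_linear (x : T) (y : T) (z : T) (Subtype.coe_le_coe.mpr h1)
        (Subtype.coe_le_coe.mpr h2) with h | h
      · exact Or.inl (Subtype.coe_le_coe.mp h)
      · exact Or.inr (Subtype.coe_le_coe.mp h)
    obtain ⟨f, hf⟩ := special_embeds hlin g
      (fun x y h => hg x y (Subtype.coe_lt_coe.mpr h))
    exact ⟨f, fun x y h => hf x y (Subtype.coe_lt_coe.mp h)⟩
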